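/- Every finite 2-connected outerplanar graph has a unique Hamilton cycle. -/

import Mathlib

open SimpleGraph

universe u w

/-- Outerplanar: the vertices can be placed (injectively) on a line — equivalently on
a circle, with all vertices on the outer face boundary — so that no two edges cross. -/
def IsOuterplanar {V : Type u} (G : SimpleGraph V) : Prop :=
  ∃ f : V → ℕ, Function.Injective f ∧
    ∀ a b c d : V, G.Adj a b → G.Adj c d →
      ¬(f a < f c ∧ f c < f b ∧ f b < f d)

/-- 2-connected: at least three vertices, and deleting any single vertex leaves a
connected graph. -/
def TwoConnected {V : Type u} (G : SimpleGraph V) : Prop :=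
  3 ≤ Nat.card V ∧ ∀ v : V, (G.induce {u | u ≠ v}).Connected


section CN
variable {V : Type u} [DecidableEq V] {G : SimpleGraph V}

omit [DecidableEq V] in
lemma my_isCycle_reverse {v : V} {p : G.Walk v v} (hp : p.IsCycle) : p.reverse.IsCycle := by
  rw [Walk.isCycle_def] at hp ⊢
  obtain ⟨ht, hnn, hnd⟩ := hp
  refine ⟨ht.reverse _, ?_, ?_⟩
  · intro h
    apply hnn
    cases p with
    | nil => rfl
    | cons h q =>
      have := congrArg Walk.length h
      simp [Nat.add_comm] at this
  · have h1 : p.reverse.support = v :: p.reverse.support.tail := Walk.support_eq_cons _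
    have h2 : p.support = v :: p.support.tail := Walk.support_eq_cons _
    have hperm : p.reverse.support.Perm p.support := by
      rw [Walk.support_reverse]; exact List.reverse_perm _
    rw [h1, h2] at hperm
    exact ((List.perm_cons v).mp hperm).nodup_iff.mpr hnd

omit [DecidableEq V] in
lemma path_peel {x z₀ y : V} (t : G.Walk x z₀) (ht : t.IsPath) (hxy : s(x, y) ∈ t.edges) :
    ∃ (z : V) (t' : G.Walk y z), t'.IsPath ∧ (∀ e ∈ t'.edges, e ∈ t.edges) ∧
      x ∉ t'.support ∧ ∀ v ∈ t.support, v = x ∨ v ∈ t'.support := by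
  cases t with
  | nil => simp at hxy
  | @cons _ b _ hadj t'' =>
    rw [Walk.cons_isPath_iff] at ht
    rw [Walk.edges_cons, List.mem_cons] at hxy
    rcases hxy with hxy | hxy
    · have hyb : y = b := by
        rcases Sym2.eq_iff.mp hxy with ⟨-, h⟩ | ⟨h1, h2⟩
        · exact h
        · exact absurd h1 hadj.ne
      subst hyb
      exact ⟨_, t'', ht.1, fun e he => List.mem_cons_of_mem _ he, ht.2,
        fun v hv => by simpa using hv⟩
    · exact absurd (Walk.fst_mem_support_of_mem_edges t'' hxy) ht.2

omit [DecidableEq V] in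
lemma path_first_edge {x z₀ c : V} (t : G.Walk x z₀) (ht : t.IsPath) (hxc : s(x, c) ∈ t.edges) :
    c = t.getVert 1 := by
  cases t with
  | nil => simp at hxc
  | @cons _ b _ hadj t'' =>
    rw [Walk.cons_isPath_iff] at ht
    rw [Walk.edges_cons, List.mem_cons] at hxc
    rcases hxc with hxc | hxc
    · rcases Sym2.eq_iff.mp hxc with ⟨-, h⟩ | ⟨h1, h2⟩
      · simpa using h
      · exact absurd h1 hadj.ne
    · exact absurd (Walk.fst_mem_support_of_mem_edges t'' hxc) ht.2

omit [DecidableEq V] in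
lemma cycle_peel_aux {x x2 y : V} (hadj : G.Adj x x2) (rest : G.Walk x2 x)
    (hc : (Walk.cons hadj rest).IsCycle) (hxy : s(x, y) ∈ rest.edges) :
    ∃ (z : V) (t : G.Walk y z), t.IsPath ∧ (∀ e ∈ t.edges, e ∈ (Walk.cons hadj rest).edges) ∧
      x ∉ t.support ∧ ∀ v ∈ (Walk.cons hadj rest).support, v = x ∨ v ∈ t.support := by
  obtain ⟨hpath, -⟩ := (Walk.cons_isCycle_iff rest hadj).mp hc
  have hxy' : s(x, y) ∈ rest.reverse.edges := by
    rw [Walk.edges_reverse, List.mem_reverse]; exact hxy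
  obtain ⟨z, t, h1, h2, h3, h4⟩ := path_peel rest.reverse hpath.reverse hxy'
  refine ⟨z, t, h1, ?_, h3, ?_⟩
  · intro e he
    have := h2 e he
    rw [Walk.edges_reverse, List.mem_reverse] at this
    exact List.mem_cons_of_mem _ this
  · intro v hv
    rw [Walk.support_cons, List.mem_cons] at hv
    rcases hv with rfl | hv
    · exact Or.inl rfl
    · exact h4 v (by rwa [Walk.support_reverse, List.mem_reverse])

omit [DecidableEq V] in
lemma cycle_peel {x y : V} (q : G.Walk x x) (hc : q.IsCycle) (hxy : s(x, y) ∈ q.edges) :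
    ∃ (z : V) (t : G.Walk y z), t.IsPath ∧ (∀ e ∈ t.edges, e ∈ q.edges) ∧
      x ∉ t.support ∧ ∀ v ∈ q.support, v = x ∨ v ∈ t.support := by
  cases q with
  | nil => simp at hxy
  | @cons _ x2 _ hadj rest =>
    obtain ⟨hpath, hnotin⟩ := (Walk.cons_isCycle_iff rest hadj).mp hc
    rw [Walk.edges_cons, List.mem_cons] at hxy
    rcases hxy with hxy | hxy
    · -- first edge: use the reverse cycle
      have hyx2 : y = x2 := by
        rcases Sym2.eq_iff.mp hxy with ⟨-, h⟩ | ⟨h1, h2⟩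
        · exact h
        · exact absurd h1 hadj.ne
      subst hyx2
      have hcQ : (Walk.cons hadj rest).reverse.IsCycle := my_isCycle_reverse hc
      obtain ⟨w2, h2, rest2, hQeq⟩ := Walk.not_nil_iff.mp hcQ.not_nil
      have hcQ' : (Walk.cons h2 rest2).IsCycle := hQeq ▸ hcQ
      have hmemQ : s(x, y) ∈ (Walk.cons h2 rest2).edges := by
        rw [← hQeq, Walk.edges_reverse, List.mem_reverse, Walk.edges_cons]
        exact List.mem_cons_self
      have hre : rest.edges ≠ [] := by
        have h3 := hc.three_le_length
        rw [Walk.length_cons] at h3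
        intro hnil
        have hl := Walk.length_edges rest
        rw [hnil] at hl
        simp at hl
        omega
      have hmem2 : s(x, y) ∈ rest2.edges := by
        rw [Walk.edges_cons, List.mem_cons] at hmemQ
        rcases hmemQ with heq | h
        · exfalso
          have hw2 : w2 = y := by
            rcases Sym2.eq_iff.mp heq with ⟨-, h⟩ | ⟨h1, -⟩
            · exact h.symm
            · exact absurd h1 h2.ne
          have h1 : (Walk.cons hadj rest).edges.reverse = s(x, y) :: rest2.edges := by
            have hxw : s(x, w2) = s(x, y) := by rw [hw2]
            rw [← Walk.edges_reverse, hQeq, Walk.edges_cons, hxw]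
          have heq2 : s(x, y) :: rest.edges = rest2.edges.reverse ++ [s(x, y)] := by
            have h5 := congrArg List.reverse h1
            rw [List.reverse_reverse, List.reverse_cons] at h5
            rw [← h5, Walk.edges_cons]
          cases hrr : rest2.edges.reverse with
          | nil =>
            rw [hrr, List.nil_append] at heq2
            exact hre (by simpa using heq2)
          | cons a tl =>
            rw [hrr, List.cons_append] at heq2
            have h6 := (List.cons.injEq _ _ _ _).mp heq2
            exact hnotin (by rw [h6.2]; simp)
        · exact h
      obtain ⟨z, t, h1', h2', h3', h4'⟩ := cycle_peel_aux h2 rest2 hcQ' hmem2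
      refine ⟨z, t, h1', ?_, h3', ?_⟩
      · intro e he
        have := h2' e he
        rw [← hQeq, Walk.edges_reverse, List.mem_reverse] at this
        exact this
      · intro v hv
        apply h4' v
        rw [← hQeq, Walk.support_reverse, List.mem_reverse]
        exact hv
    · exact cycle_peel_aux hadj rest hc hxy

lemma cycle_peel_ham {r x y : V} (q : G.Walk r r) (hq : q.IsHamiltonianCycle)
    (hxy : s(x, y) ∈ q.edges) :
    ∃ (z : V) (t : G.Walk y z), t.IsPath ∧ (∀ e ∈ t.edges, e ∈ q.edges) ∧
      x ∉ t.support ∧ ∀ v : V, v ≠ x → v ∈ t.support := by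
  have hx : x ∈ q.support := hq.mem_support x
  have hc1 : (q.rotate x hx).IsCycle := hq.isCycle.rotate hx
  have hedges : ∀ e, e ∈ (q.rotate x hx).edges ↔ e ∈ q.edges :=
    fun e => (Walk.rotate_edges q x hx).mem_iff
  have hsupp : ∀ v : V, v ∈ (q.rotate x hx).support := by
    intro v
    have h1 : v ∈ q.support.tail := by
      have := hq.isHamiltonian_tail.mem_support v
      rwa [Walk.support_tail_of_not_nil q hq.isCycle.not_nil] at this
    exact List.mem_of_mem_tail ((Walk.support_rotate q x hx).mem_iff.mpr h1)
  obtain ⟨z, t, h1, h2, h3, h4⟩ := cycle_peel (q.rotate x hx) hc1 ((hedges _).mpr hxy)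
  exact ⟨z, t, h1, fun e he => (hedges e).mp (h2 e he), h3,
    fun v hv => (h4 v (hsupp v)).resolve_left hv⟩

end CN


section Order
variable {V : Type u} {G : SimpleGraph V}

lemma Ecase [L : LinearOrder V]
    (hnc : ∀ a b c d : V, G.Adj a b → G.Adj c d → a < c → c < b → b < d → False)
    (hdel : ∀ v : V, (G.induce {u | u ≠ v}).Connected)
    {u w a b : V} (huw : u < w) (hcov : ∀ x : V, u < x → w ≤ x)
    (hab : G.Adj a b) (hau : a ≤ u) (hwb : w ≤ b)
    (hmin : ∀ c d : V, G.Adj c d → c ≤ u → w ≤ d → a < c → b < d)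
    (hlt : a < u) : False := by
  have hune : u ≠ a := (ne_of_lt hlt).symm
  have hbu : ¬ b ≤ u := fun h => absurd huw (not_lt.mpr (hwb.trans h))
  have hbne : b ≠ a := fun h => hbu (h ▸ hau)
  obtain ⟨W⟩ := (hdel a).preconnected ⟨u, hune⟩ ⟨b, hbne⟩
  obtain ⟨d, hd, hdf, hds⟩ := W.exists_boundary_dart
    {p : {y : V | y ≠ a} | a < p.val ∧ p.val ≤ u} ⟨hlt, le_refl u⟩ (fun hmem => hbu hmem.2)
  have hadjyc : G.Adj d.fst.val d.snd.val := d.adj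
  set c : V := d.snd.val with hcdef
  set y : V := d.fst.val with hydef
  have hy1 : a < y := hdf.1
  have hy2 : y ≤ u := hdf.2
  have hca : c ≠ a := d.snd.prop
  have hyb : y < b := lt_of_le_of_lt hy2 (lt_of_lt_of_le huw hwb)
  have hcS : ¬(a < c ∧ c ≤ u) := hds
  rcases lt_or_gt_of_ne hca with hc1 | hc2
  · exact hnc c y a b hadjyc.symm hab hc1 hy1 hyb
  · have hcu : u < c := lt_of_not_ge (fun h => hcS ⟨hc2, h⟩)
    have hwc : w ≤ c := hcov c hcu
    have hbc : b < c := hmin y c hadjyc hy2 hwc hy1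
    exact hnc a b y c hab hadjyc hy1 hyb hbc

lemma Ucase [L : LinearOrder V] [DecidableEq V]
    (hnc : ∀ a b c d : V, G.Adj a b → G.Adj c d → a < c → c < b → b < d → False)
    {r : V} (q : G.Walk r r) (hq : q.IsHamiltonianCycle)
    {u w a b : V} (huw : u < w) (hcov : ∀ x : V, u < x → w ≤ x)
    (hab : G.Adj a b) (habq : s(a, b) ∈ q.edges) (hau : a ≤ u) (hwb : w ≤ b)
    (hmin : ∀ c d : V, G.Adj c d → s(c, d) ∈ q.edges → c ≤ u → w ≤ d → a < c → b < d)
    (hlt : a < u) : False := by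
  obtain ⟨z, t, htp, hte, hta, hts⟩ := cycle_peel_ham q hq habq
  have hu_t : u ∈ t.support := hts u (ne_of_gt hlt)
  have hbu : ¬ b ≤ u := fun h => absurd huw (not_lt.mpr (hwb.trans h))
  obtain ⟨d, hd, hdf, hds⟩ := (t.takeUntil u hu_t).exists_boundary_dart
    {x : V | ¬(a < x ∧ x ≤ u)} (fun hmem => hbu hmem.2) (fun hmem => hmem ⟨hlt, le_refl u⟩)
  have hadjcy : G.Adj d.fst d.snd := d.adj
  set c : V := d.fst with hcdef
  set y : V := d.snd with hydef
  have hyS : a < y ∧ y ≤ u := not_not.mp hds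
  have hcyq : s(c, y) ∈ q.edges := by
    apply hte
    apply Walk.edges_takeUntil_subset t hu_t
    exact List.mem_map_of_mem (f := Dart.edge) hd
  have hca : c ≠ a := by
    intro h
    apply hta
    rw [← h]
    exact Walk.support_takeUntil_subset t hu_t
      (Walk.dart_fst_mem_support_of_mem_darts _ hd)
  have hyb : y < b := lt_of_le_of_lt hyS.2 (lt_of_lt_of_le huw hwb)
  rcases lt_or_gt_of_ne hca with hc1 | hc2
  · exact hnc c y a b hadjcy hab hc1 hyS.1 hyb
  · have hcu : u < c := lt_of_not_ge (fun h => hdf ⟨hc2, h⟩)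
    have hwc : w ≤ c := hcov c hcu
    have hbc : b < c := hmin y c hadjcy.symm (by rwa [Sym2.eq_swap] at hcyq) hyS.2 hwc hyS.1
    exact hnc a b y c hab hadjcy.symm hyS.1 hyb hbc

end Order

section Order2
variable {V : Type u} {G : SimpleGraph V}

lemma ham_mem_rotate_support [DecidableEq V] {r x : V} (q : G.Walk r r)
    (hq : q.IsHamiltonianCycle) (hx : x ∈ q.support) (v : V) : v ∈ (q.rotate x hx).support := by
  have h1 : v ∈ q.support.tail := by
    have := hq.isHamiltonian_tail.mem_support v
    rwa [Walk.support_tail_of_not_nil q hq.isCycle.not_nil] at this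
  exact List.mem_of_mem_tail ((Walk.support_rotate q x hx).mem_iff.mpr h1)

lemma E1 [L : LinearOrder V] [Fintype V]
    (hnc : ∀ a b c d : V, G.Adj a b → G.Adj c d → a < c → c < b → b < d → False)
    (hdel : ∀ v : V, (G.induce {u | u ≠ v}).Connected)
    (hcard : 3 ≤ Fintype.card V)
    {u w : V} (huw : u < w) (hcov : ∀ x : V, u < x → w ≤ x) : G.Adj u w := by
  classical
  by_contra hne
  obtain ⟨z, hzu, hzw⟩ : ∃ z : V, z ≠ u ∧ z ≠ w := by
    by_contra hz
    push_neg at hz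
    have hsub : (Finset.univ : Finset V) ⊆ {u, w} := by
      intro x _
      by_cases hxu : x = u
      · simp [hxu]
      · simp [hz x hxu]
    have hle := Finset.card_le_card hsub
    have : ({u, w} : Finset V).card ≤ 2 := Finset.card_insert_le _ _ |>.trans (by simp)
    rw [Finset.card_univ] at hle
    omega
  obtain ⟨W⟩ := (hdel z).preconnected ⟨u, hzu.symm⟩ ⟨w, hzw.symm⟩
  obtain ⟨d, hd, hdf, hds⟩ := W.exists_boundary_dart {p : {y : V | y ≠ z} | p.val ≤ u}
      (le_refl u) (fun hmem => absurd huw (not_lt.mpr hmem))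
  have hadj0 : G.Adj d.fst.val d.snd.val := d.adj
  have hgap : w ≤ d.snd.val := hcov _ (lt_of_not_ge hds)
  set F : Finset (V × V) :=
    Finset.univ.filter (fun p : V × V => G.Adj p.1 p.2 ∧ p.1 ≤ u ∧ w ≤ p.2) with hF
  have hFne : F.Nonempty := ⟨(d.fst.val, d.snd.val), by
    simp only [hF, Finset.mem_filter, Finset.mem_univ, true_and]
    exact ⟨hadj0, hdf, hgap⟩⟩
  obtain ⟨p0, hp0F, hp0min⟩ := Finset.exists_min_image F
      (fun p => (Finset.univ.filter (fun x : V => p.1 ≤ x ∧ x ≤ p.2)).card) hFne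
  rw [hF, Finset.mem_filter] at hp0F
  obtain ⟨-, hab, hau, hwb⟩ := hp0F
  have h12 : p0.1 < p0.2 := lt_of_le_of_lt hau (lt_of_lt_of_le huw hwb)
  have hmin2 : ∀ c dd : V, G.Adj c dd → c ≤ u → w ≤ dd → p0.1 ≤ c → dd ≤ p0.2 →
      c = p0.1 ∧ dd = p0.2 := by
    intro c dd h1 h2 h3 h4 h5
    by_contra hcd
    have hx : ∃ x : V, (p0.1 ≤ x ∧ x ≤ p0.2) ∧ ¬(c ≤ x ∧ x ≤ dd) := by
      rcases eq_or_lt_of_le h4 with he | hlt4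
      · rcases eq_or_lt_of_le h5 with he5 | hlt5
        · exact absurd ⟨he.symm, he5⟩ hcd
        · exact ⟨p0.2, ⟨le_of_lt h12, le_refl _⟩, fun hc => absurd hc.2 (not_le.mpr hlt5)⟩
      · exact ⟨p0.1, ⟨le_refl _, le_of_lt h12⟩, fun hc => absurd hc.1 (not_le.mpr hlt4)⟩
    obtain ⟨x, hx1, hx2⟩ := hx
    have hsub : (Finset.univ.filter (fun x : V => c ≤ x ∧ x ≤ dd)) ⊂
        (Finset.univ.filter (fun x : V => p0.1 ≤ x ∧ x ≤ p0.2)) := by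
      refine (Finset.ssubset_iff_of_subset ?_).mpr ⟨x, by simp [hx1], by simp [hx2]⟩
      intro t ht
      simp only [Finset.mem_filter, Finset.mem_univ, true_and] at ht ⊢
      exact ⟨le_trans h4 ht.1, le_trans ht.2 h5⟩
    have hlt' := Finset.card_lt_card hsub
    have hge := hp0min (c, dd) (by simp [hF, h1, h2, h3])
    exact absurd (lt_of_le_of_lt hge hlt') (lt_irrefl _)
  have hd1 : p0.1 < u ∨ w < p0.2 := by
    rcases eq_or_lt_of_le hau with he | h
    · rcases eq_or_lt_of_le hwb with he2 | h2
      · exact absurd (he ▸ he2 ▸ hab) hne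
      · exact Or.inr h2
    · exact Or.inl h
  rcases hd1 with hcase | hcase
  · refine Ecase hnc hdel huw hcov hab hau hwb ?_ hcase
    intro c dd h1 h2 h3 h4
    by_contra h5
    push_neg at h5
    exact absurd (hmin2 c dd h1 h2 h3 (le_of_lt h4) h5).1 (ne_of_gt h4)
  · refine Ecase (L := inferInstanceAs (LinearOrder Vᵒᵈ)) (G := G) ?_ hdel
      (u := w) (w := u) (a := p0.2) (b := p0.1) huw ?_ hab.symm hwb hau ?_ hcase
    · intro a b c dd h1 h2 l1 l2 l3
      exact hnc dd c b a h2.symm h1.symm l3 l2 l1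
    · intro x hx
      by_contra h
      have h' : ¬ x ≤ u := h
      have hx' : x < w := hx
      exact absurd (hcov x (lt_of_not_ge h')) (not_le.mpr hx')
    · intro c dd h1 h2 h3 h4
      by_contra h5
      have h5' : p0.1 ≤ dd := le_of_not_gt (fun hh => h5 hh)
      have h4' : c < p0.2 := h4
      have := hmin2 dd c h1.symm h3 h2 h5' (le_of_lt h4')
      exact absurd this.2 (ne_of_lt h4')

lemma E2 [L : LinearOrder V] [Fintype V]
    (hnc : ∀ a b c d : V, G.Adj a b → G.Adj c d → a < c → c < b → b < d → False)
    (hdel : ∀ v : V, (G.induce {u | u ≠ v}).Connected)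
    (hcard : 3 ≤ Fintype.card V)
    {x0 x1 : V} (hmin0 : ∀ x : V, x0 ≤ x) (hmax : ∀ x : V, x ≤ x1)
    (hne01 : x0 ≠ x1) : G.Adj x0 x1 := by
  classical
  by_contra hnadj
  have h01 : x0 < x1 := lt_of_le_of_ne (hmin0 x1) hne01
  -- successor of x0
  have hSne : (Finset.univ.filter (fun x : V => x0 < x)).Nonempty := ⟨x1, by simp [h01]⟩
  set w0 := (Finset.univ.filter (fun x : V => x0 < x)).min' hSne with hw0
  have hx0w0 : x0 < w0 := by
    have := Finset.min'_mem _ hSne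
    simpa [hw0] using (Finset.mem_filter.mp this).2
  have hcov0 : ∀ x : V, x0 < x → w0 ≤ x := fun x hx =>
    Finset.min'_le _ x (by simp [hx])
  have hadjw0 : G.Adj x0 w0 := E1 hnc hdel hcard hx0w0 hcov0
  set N := Finset.univ.filter (fun y => G.Adj x0 y) with hN
  have hNne : N.Nonempty := ⟨w0, by simp [hN, hadjw0]⟩
  set b := N.max' hNne with hb
  have hadj0b : G.Adj x0 b := by
    have := N.max'_mem hNne
    simpa [hN] using this
  have hble : ∀ y : V, G.Adj x0 y → y ≤ b := fun y hy => N.le_max' y (by simp [hN, hy])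
  have hbx1 : b < x1 := lt_of_le_of_ne (hmax b) (fun h => hnadj (h ▸ hadj0b))
  have hx0b : x0 < b := lt_of_le_of_ne (hmin0 b) hadj0b.ne
  obtain ⟨W⟩ := (hdel b).preconnected ⟨x0, ne_of_lt hx0b⟩ ⟨x1, (ne_of_lt hbx1).symm⟩
  obtain ⟨d, hd, hdf, hds⟩ := W.exists_boundary_dart {p : {y : V | y ≠ b} | p.val ≤ b}
      (le_of_lt hx0b) (fun h => absurd hbx1 (not_lt.mpr h))
  have hadjcy : G.Adj d.fst.val d.snd.val := d.adj
  have hclt : d.fst.val < b := lt_of_le_of_ne hdf d.fst.prop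
  have hylt : b < d.snd.val := lt_of_not_ge hds
  by_cases hc0 : d.fst.val = x0
  · rw [hc0] at hadjcy
    exact absurd (hble _ hadjcy) (not_le.mpr hylt)
  · exact hnc x0 b d.fst.val d.snd.val hadj0b hadjcy
      (lt_of_le_of_ne (hmin0 _) (Ne.symm hc0)) hclt hylt

lemma U2 [L : LinearOrder V] [DecidableEq V] [Fintype V]
    (hnc : ∀ a b c d : V, G.Adj a b → G.Adj c d → a < c → c < b → b < d → False)
    {r : V} (q : G.Walk r r) (hq : q.IsHamiltonianCycle)
    {x0 x1 : V} (hmin0 : ∀ x : V, x0 ≤ x) (hmax : ∀ x : V, x ≤ x1)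
    (hne01 : x0 ≠ x1) : s(x0, x1) ∈ q.edges := by
  classical
  by_contra hnedge
  have hx : x0 ∈ q.support := hq.mem_support x0
  have hc1 : (q.rotate x0 hx).IsCycle := hq.isCycle.rotate hx
  obtain ⟨w2, h2, rest2, hQeq⟩ := Walk.not_nil_iff.mp hc1.not_nil
  have hw2q : s(x0, w2) ∈ q.edges := by
    have : s(x0, w2) ∈ (q.rotate x0 hx).edges := by
      rw [hQeq, Walk.edges_cons]; exact List.mem_cons_self
    exact (Walk.rotate_edges q x0 hx).mem_iff.mp this
  set N := Finset.univ.filter (fun y => s(x0, y) ∈ q.edges) with hN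
  have hNne : N.Nonempty := ⟨w2, by simp [hN, hw2q]⟩
  set b := N.max' hNne with hb
  have hbq : s(x0, b) ∈ q.edges := by
    have := N.max'_mem hNne
    simpa [hN] using this
  have hadj0b : G.Adj x0 b := q.adj_of_mem_edges hbq
  have hble : ∀ y : V, s(x0, y) ∈ q.edges → y ≤ b := fun y hy => N.le_max' y (by simp [hN, hy])
  have hbx1 : b < x1 := lt_of_le_of_ne (hmax b) (fun h => hnedge (h ▸ hbq))
  have hx0b : x0 < b := lt_of_le_of_ne (hmin0 b) hadj0b.ne
  obtain ⟨z, t, htp, hte, htb, hts⟩ := cycle_peel_ham q hq (by rwa [Sym2.eq_swap] at hbq)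
  have hx1t : x1 ∈ t.support := hts x1 (ne_of_gt hbx1)
  obtain ⟨d, hd, hdf, hds⟩ := (t.takeUntil x1 hx1t).exists_boundary_dart
    {x : V | x ≤ b} (le_of_lt hx0b) (fun h => absurd hbx1 (not_lt.mpr h))
  have hadjcy : G.Adj d.fst d.snd := d.adj
  have hcyq : s(d.fst, d.snd) ∈ q.edges :=
    hte _ (Walk.edges_takeUntil_subset t hx1t (List.mem_map_of_mem (f := Dart.edge) hd))
  have hcb : d.fst ≠ b := fun h => htb (h ▸ Walk.support_takeUntil_subset t hx1t
    (Walk.dart_fst_mem_support_of_mem_darts _ hd))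
  have hclt : d.fst < b := lt_of_le_of_ne hdf hcb
  have hylt : b < d.snd := lt_of_not_ge hds
  by_cases hc0 : d.fst = x0
  · rw [hc0] at hcyq
    exact absurd (hble d.snd hcyq) (not_le.mpr hylt)
  · exact hnc x0 b d.fst d.snd hadj0b hadjcy
      (lt_of_le_of_ne (hmin0 _) (Ne.symm hc0)) hclt hylt

lemma U1 [L : LinearOrder V] [DecidableEq V] [Fintype V]
    (hnc : ∀ a b c d : V, G.Adj a b → G.Adj c d → a < c → c < b → b < d → False)
    {r : V} (q : G.Walk r r) (hq : q.IsHamiltonianCycle)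
    {u w : V} (huw : u < w) (hcov : ∀ x : V, u < x → w ≤ x) : s(u, w) ∈ q.edges := by
  classical
  by_contra hne
  have hu : u ∈ q.support := hq.mem_support u
  have hwsup : w ∈ (q.rotate u hu).support := ham_mem_rotate_support q hq hu w
  obtain ⟨d, hd, hdf, hds⟩ := ((q.rotate u hu).takeUntil w hwsup).exists_boundary_dart
    {x : V | x ≤ u} (le_refl u) (fun hmem => absurd huw (not_lt.mpr hmem))
  have hadj0 : G.Adj d.fst d.snd := d.adj
  have hgap : w ≤ d.snd := hcov _ (lt_of_not_ge hds)
  have hq0 : s(d.fst, d.snd) ∈ q.edges := by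
    have h1 : s(d.fst, d.snd) ∈ ((q.rotate u hu).takeUntil w hwsup).edges :=
      List.mem_map_of_mem (f := Dart.edge) hd
    exact (Walk.rotate_edges q u hu).mem_iff.mp
      (Walk.edges_takeUntil_subset _ hwsup h1)
  set F : Finset (V × V) :=
    Finset.univ.filter (fun p : V × V =>
      (G.Adj p.1 p.2 ∧ s(p.1, p.2) ∈ q.edges) ∧ p.1 ≤ u ∧ w ≤ p.2) with hF
  have hFne : F.Nonempty := ⟨(d.fst, d.snd), by
    simp only [hF, Finset.mem_filter, Finset.mem_univ, true_and]
    exact ⟨⟨hadj0, hq0⟩, hdf, hgap⟩⟩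
  obtain ⟨p0, hp0F, hp0min⟩ := Finset.exists_min_image F
      (fun p => (Finset.univ.filter (fun x : V => p.1 ≤ x ∧ x ≤ p.2)).card) hFne
  rw [hF, Finset.mem_filter] at hp0F
  obtain ⟨-, ⟨hab, habq⟩, hau, hwb⟩ := hp0F
  have h12 : p0.1 < p0.2 := lt_of_le_of_lt hau (lt_of_lt_of_le huw hwb)
  have hmin2 : ∀ c dd : V, G.Adj c dd → s(c, dd) ∈ q.edges → c ≤ u → w ≤ dd → p0.1 ≤ c →
      dd ≤ p0.2 → c = p0.1 ∧ dd = p0.2 := by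
    intro c dd h1 h1q h2 h3 h4 h5
    by_contra hcd
    have hx : ∃ x : V, (p0.1 ≤ x ∧ x ≤ p0.2) ∧ ¬(c ≤ x ∧ x ≤ dd) := by
      rcases eq_or_lt_of_le h4 with he | hlt4
      · rcases eq_or_lt_of_le h5 with he5 | hlt5
        · exact absurd ⟨he.symm, he5⟩ hcd
        · exact ⟨p0.2, ⟨le_of_lt h12, le_refl _⟩, fun hc => absurd hc.2 (not_le.mpr hlt5)⟩
      · exact ⟨p0.1, ⟨le_refl _, le_of_lt h12⟩, fun hc => absurd hc.1 (not_le.mpr hlt4)⟩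
    obtain ⟨x, hx1, hx2⟩ := hx
    have hsub : (Finset.univ.filter (fun x : V => c ≤ x ∧ x ≤ dd)) ⊂
        (Finset.univ.filter (fun x : V => p0.1 ≤ x ∧ x ≤ p0.2)) := by
      refine (Finset.ssubset_iff_of_subset ?_).mpr ⟨x, by simp [hx1], by simp [hx2]⟩
      intro t ht
      simp only [Finset.mem_filter, Finset.mem_univ, true_and] at ht ⊢
      exact ⟨le_trans h4 ht.1, le_trans ht.2 h5⟩
    have hlt' := Finset.card_lt_card hsub
    have hge := hp0min (c, dd) (by simp [hF, h1, h1q, h2, h3])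
    exact absurd (lt_of_le_of_lt hge hlt') (lt_irrefl _)
  have hd1 : p0.1 < u ∨ w < p0.2 := by
    rcases eq_or_lt_of_le hau with he | h
    · rcases eq_or_lt_of_le hwb with he2 | h2
      · exact absurd (he ▸ he2 ▸ habq) hne
      · exact Or.inr h2
    · exact Or.inl h
  rcases hd1 with hcase | hcase
  · refine Ucase hnc q hq huw hcov hab habq hau hwb ?_ hcase
    intro c dd h1 h1q h2 h3 h4
    by_contra h5
    push_neg at h5
    exact absurd (hmin2 c dd h1 h1q h2 h3 (le_of_lt h4) h5).1 (ne_of_gt h4)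
  · refine Ucase (L := inferInstanceAs (LinearOrder Vᵒᵈ)) (G := G) ?_ q hq
      (u := w) (w := u) (a := p0.2) (b := p0.1) huw ?_ hab.symm
      (by rwa [Sym2.eq_swap] at habq) hwb hau ?_ hcase
    · intro a b c dd h1 h2 l1 l2 l3
      exact hnc dd c b a h2.symm h1.symm l3 l2 l1
    · intro x hx
      by_contra h
      have h' : ¬ x ≤ u := h
      have hx' : x < w := hx
      exact absurd (hcov x (lt_of_not_ge h')) (not_le.mpr hx')
    · intro c dd h1 h1q h2 h3 h4
      by_contra h5
      have h5' : p0.1 ≤ dd := le_of_not_gt (fun hh => h5 hh)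
      have h4' : c < p0.2 := h4
      have := hmin2 dd c h1.symm (by rwa [Sym2.eq_swap] at h1q) h3 h2 h5' (le_of_lt h4')
      exact absurd this.2 (ne_of_lt h4')

end Order2

section MkWalk
variable {V : Type u} {G : SimpleGraph V}

def mkWalk : ∀ (a : V) (l : List V) (b : V), List.Chain G.Adj a (l ++ [b]) → G.Walk a b
  | _, [], _, h => Walk.cons (List.chain_cons.mp h).1 Walk.nil
  | a, c :: l, b, h => Walk.cons (List.chain_cons.mp h).1 (mkWalk c l b (List.chain_cons.mp h).2)

lemma mkWalk_cons (a c : V) (l : List V) (b : V) (h : List.Chain G.Adj a ((c :: l) ++ [b])) :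
    mkWalk a (c :: l) b h
      = Walk.cons (List.chain_cons.mp h).1 (mkWalk c l b (List.chain_cons.mp h).2) := rfl

lemma mkWalk_support : ∀ (a : V) (l : List V) (b : V) (h : List.Chain G.Adj a (l ++ [b])),
    (mkWalk a l b h).support = a :: (l ++ [b])
  | _, [], _, _ => rfl
  | a, c :: l, b, h => by
    show (Walk.cons _ (mkWalk c l b _)).support = _
    rw [Walk.support_cons]
    exact congrArg (a :: ·) (mkWalk_support c l b _)

lemma mkWalk_edges_P {P : Sym2 V → Prop} : ∀ (a : V) (l : List V) (b : V)
    (h : List.Chain G.Adj a (l ++ [b])),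
    List.Chain (fun x y => P s(x, y)) a (l ++ [b]) → ∀ e ∈ (mkWalk a l b h).edges, P e
  | a, [], b, h, hP, e, he => by
    simp only [mkWalk, Walk.edges_cons, Walk.edges_nil, List.mem_singleton] at he
    subst he
    exact (List.chain_cons.mp hP).1
  | a, c :: l, b, h, hP, e, he => by
    simp only [mkWalk, Walk.edges_cons, List.mem_cons] at he
    rcases he with rfl | he
    · exact (List.chain_cons.mp hP).1
    · exact mkWalk_edges_P c l b _ (List.chain_cons.mp hP).2 e he

lemma chain_append_single {α : Type*} {R : α → α → Prop} :
    ∀ (x : α) (m : List α) (b : α), List.Chain' R (x :: m) →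
      R ((x :: m).getLast (List.cons_ne_nil _ _)) b → List.Chain R x (m ++ [b])
  | x, [], b, _, hR => List.Chain.cons hR List.Chain.nil
  | x, y :: m, b, hC, hR => by
    replace hC := List.isChain_cons_cons.mp hC
    refine List.Chain.cons hC.1 (chain_append_single y m b hC.2 ?_)
    rwa [List.getLast_cons (List.cons_ne_nil _ _)] at hR

end MkWalk

/-- Every finite 2-connected outerplanar graph has a Hamilton cycle,
and it is unique as an edge set. -/
theorem stmt_7 {V : Type u} [Fintype V] [DecidableEq V] (G : SimpleGraph V) (ho : IsOuterplanar G)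
    (h2 : TwoConnected G) :
    ∃ (a : V) (p : G.Walk a a), p.IsHamiltonianCycle ∧
      ∀ (b : V) (q : G.Walk b b), q.IsHamiltonianCycle →
        {e | e ∈ q.edges} = {e | e ∈ p.edges} := by
  classical
  obtain ⟨f, hfinj, hnc0⟩ := ho
  obtain ⟨hcard0, hdel⟩ := h2
  rw [Nat.card_eq_fintype_card] at hcard0
  letI L : LinearOrder V := LinearOrder.lift' f hfinj
  have hltiff : ∀ x y : V, x < y ↔ f x < f y := by
    intro x y
    constructor
    · intro h; exact h
    · intro h; exact h
  have hnc : ∀ a b c d : V, G.Adj a b → G.Adj c d → a < c → c < b → b < d → False := by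
    intro a b c d h1 h2' l1 l2 l3
    exact hnc0 a b c d h1 h2' ⟨(hltiff _ _).mp l1, (hltiff _ _).mp l2, (hltiff _ _).mp l3⟩
  -- the sorted list of all vertices
  obtain ⟨l, hldef⟩ : ∃ l : List V, l = Finset.univ.sort (· ≤ ·) := ⟨_, rfl⟩
  have hlen : l.length = Fintype.card V := by
    rw [hldef, Finset.length_sort, Finset.card_univ]
  have hmem : ∀ x : V, x ∈ l := fun x => hldef ▸ (Finset.mem_sort _).mpr (Finset.mem_univ x)
  have hnd : l.Nodup := hldef ▸ Finset.sort_nodup _ _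
  have hsorted : List.Pairwise (· < ·) l := hldef ▸ (Finset.sortedLT_sort _).pairwise
  have hpair : ∀ (i j : Fin l.length), i < j → l.get i < l.get j :=
    fun i j hij => List.pairwise_iff_get.mp hsorted i j hij
  have hlen3 : 3 ≤ l.length := by omega
  have hcovget : ∀ (i : ℕ) (h1 : i < l.length - 1),
      l.get ⟨i, by omega⟩ < l.get ⟨i + 1, by omega⟩ ∧
        ∀ x : V, l.get ⟨i, by omega⟩ < x → l.get ⟨i + 1, by omega⟩ ≤ x := by
    intro i h1
    refine ⟨hpair _ _ (by simp), ?_⟩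
    intro x hx
    obtain ⟨j, hj⟩ := List.mem_iff_get.mp (hmem x)
    rcases Nat.lt_or_ge (j : ℕ) (i + 1) with hji | hji
    · exfalso
      have hle : l.get j ≤ l.get ⟨i, by omega⟩ := by
        rcases Nat.lt_or_ge (j : ℕ) i with h2' | h2'
        · exact le_of_lt (hpair j ⟨i, by omega⟩ h2')
        · have hji2 : (j : ℕ) = i := by omega
          exact le_of_eq (by congr 1; exact Fin.ext hji2)
      rw [hj] at hle
      exact absurd hx (not_lt.mpr hle)
    · rcases Nat.eq_or_lt_of_le hji with h2' | h2'
      · refine le_of_eq ?_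
        rw [← hj]
        congr 1
        exact Fin.ext h2'
      · exact le_of_lt (by rw [← hj]; exact hpair ⟨i + 1, by omega⟩ j h2')
  have hget0min : ∀ x : V, l.get ⟨0, by omega⟩ ≤ x := by
    intro x
    obtain ⟨j, hj⟩ := List.mem_iff_get.mp (hmem x)
    rcases Nat.eq_zero_or_pos (j : ℕ) with h | h
    · exact le_of_eq (by rw [← hj]; congr 1; exact Fin.ext h.symm)
    · exact le_of_lt (by rw [← hj]; exact hpair ⟨0, by omega⟩ j h)
  have hgetlastmax : ∀ x : V, x ≤ l.get ⟨l.length - 1, by omega⟩ := by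
    intro x
    obtain ⟨j, hj⟩ := List.mem_iff_get.mp (hmem x)
    rcases Nat.eq_or_lt_of_le (Nat.le_sub_one_of_lt j.isLt) with h | h
    · exact le_of_eq (by rw [← hj]; congr 1; exact Fin.ext h)
    · exact le_of_lt (by rw [← hj]; exact hpair j ⟨l.length - 1, by omega⟩ h)
  -- destructure l
  obtain ⟨a, c, c2, rest, hleq⟩ : ∃ a c c2 rest, l = a :: c :: c2 :: rest := by
    match l, hlen3 with
    | x :: y :: z :: t, _ => exact ⟨x, y, z, t, rfl⟩
  subst hleq
  set vl : V := (a :: c :: c2 :: rest).getLast (List.cons_ne_nil _ _) with hvl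
  have hvlget : (a :: c :: c2 :: rest).get ⟨(a :: c :: c2 :: rest).length - 1, by omega⟩ = vl := by
    rw [hvl, List.getLast_eq_getElem, List.get_eq_getElem]
  have hamin : ∀ x : V, a ≤ x := hget0min
  have hvlmax : ∀ x : V, x ≤ vl := by
    intro x
    rw [← hvlget]
    exact hgetlastmax x
  have hanevl : a ≠ vl := by
    have h4 : (a :: c :: c2 :: rest).get ⟨0, by omega⟩ <
        (a :: c :: c2 :: rest).get ⟨(a :: c :: c2 :: rest).length - 1, by omega⟩ :=
      hpair _ _ (Fin.mk_lt_mk.mpr (by omega))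
    rw [hvlget] at h4
    exact ne_of_lt h4
  have hadjavl : G.Adj a vl := E2 hnc hdel hcard0 hamin hvlmax hanevl
  -- the chain
  have hchainCov : List.Chain' (fun x y => x < y ∧ ∀ t : V, x < t → y ≤ t)
      (a :: c :: c2 :: rest) :=
    List.isChain_iff_getElem.mpr (fun i h => hcovget i (by omega))
  have hchainR : List.Chain' (fun x y => G.Adj x y ∧
      ((x < y ∧ ∀ t : V, x < t → y ≤ t) ∨ (x = vl ∧ y = a))) (a :: c :: c2 :: rest) := by
    refine List.IsChain.imp ?_ hchainCov
    intro x y h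
    exact ⟨E1 hnc hdel hcard0 h.1 h.2, Or.inl h⟩
  have hchainFull : List.Chain (fun x y => G.Adj x y ∧
      ((x < y ∧ ∀ t : V, x < t → y ≤ t) ∨ (x = vl ∧ y = a))) a ((c :: c2 :: rest) ++ [a]) := by
    refine chain_append_single a (c :: c2 :: rest) a hchainR ?_
    exact ⟨hadjavl.symm, Or.inr ⟨rfl, rfl⟩⟩
  have hchainAdj : List.Chain G.Adj a ((c :: c2 :: rest) ++ [a]) :=
    List.IsChain.imp (fun _ _ h => h.1) hchainFull
  -- the walk
  set q' : G.Walk c a := mkWalk c (c2 :: rest) a (List.chain_cons.mp hchainAdj).2 with hq'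
  set p0 : G.Walk a a := mkWalk a (c :: c2 :: rest) a hchainAdj with hp0
  have hp0eq : p0 = Walk.cons (List.chain_cons.mp hchainAdj).1 q' := rfl
  have hnd' : (a :: c :: c2 :: rest).Nodup := hnd
  have hq'supp : q'.support = c :: ((c2 :: rest) ++ [a]) := mkWalk_support _ _ _ _
  have hpermsup : (c :: ((c2 :: rest) ++ [a])).Perm (a :: c :: c2 :: rest) :=
    List.Perm.trans (List.Perm.cons c (List.perm_append_singleton a (c2 :: rest)))
      (List.Perm.swap a c (c2 :: rest))
  have hq'path : q'.IsPath := by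
    apply Walk.IsPath.mk'
    rw [hq'supp]
    exact hpermsup.nodup_iff.mpr hnd'
  have hnotmem : s(a, c) ∉ q'.edges := by
    intro hmem'
    have hfe := path_first_edge q' hq'path (by rwa [Sym2.eq_swap] at hmem')
    have hgv : q'.getVert 1 = c2 := by
      simp only [hq', mkWalk, Walk.getVert_cons_succ, Walk.getVert_zero]
    rw [hgv] at hfe
    rw [List.nodup_cons] at hnd'
    exact hnd'.1 (by rw [hfe]; simp)
  have hcyc : p0.IsCycle := by
    rw [hp0eq]
    exact (Walk.cons_isCycle_iff _ _).mpr ⟨hq'path, hnotmem⟩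
  have hham : p0.IsHamiltonianCycle := by
    rw [Walk.isHamiltonianCycle_isCycle_and_isHamiltonian_tail]
    refine ⟨hcyc, ?_⟩
    rw [hp0eq, Walk.tail_cons]
    intro v
    have hcnt : List.count v q'.support = 1 := by
      rw [hq'supp, hpermsup.count_eq]
      exact List.count_eq_one_of_mem hnd (hmem v)
    convert hcnt using 2
    exact Walk.support_copy _ _ _
  refine ⟨a, p0, hham, ?_⟩
  intro b q hq
  have hsub : ∀ e ∈ p0.edges, e ∈ q.edges := by
    rw [hp0]
    refine mkWalk_edges_P (P := fun e => e ∈ q.edges) a (c :: c2 :: rest) a hchainAdj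
      (List.Chain.imp ?_ hchainFull)
    intro x y h
    rcases h.2 with hcov | ⟨hx, hy⟩
    · exact U1 hnc q hq hcov.1 hcov.2
    · subst hx; subst hy
      rw [Sym2.eq_swap]
      exact U2 hnc q hq hamin hvlmax hanevl
  have hndp : p0.edges.Nodup := hcyc.isCircuit.isTrail.edges_nodup
  have hlenq : q.edges.length ≤ p0.edges.length := by
    rw [Walk.length_edges, Walk.length_edges, hham.length_eq, hq.length_eq]
  have hperm2 : p0.edges.Perm q.edges :=
    (List.subperm_of_subset hndp (fun e he => hsub e he)).perm_of_length_le hlenq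
  ext e
  exact (hperm2.mem_iff).symm
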